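/- Let R be a commutative ring, g ∈ R[X] a monic polynomial of degree m, and f ∈ R[X] any polynomial. Let S be the localization of the quotient ring R[X]/(g) at the powers of the image of f. Then S, regarded as an R-module, has rank at most m. -/

import Mathlib

universe u v

/-- Shannon's rank of flat modules: an `R`-module `P` has rank at most `r` if it is
isomorphic to the direct limit of some directed system of `R`-modules in which every
module is a finitely generated free `R`-module of rank at most `r`. -/
def HasRankLE (R : Type u) [CommRing R] (r : ℕ)
    (P : Type v) [AddCommGroup P] [Module R P] : Prop :=
  ∃ (ι : Type v) (_ : Preorder ι) (_ : IsDirected ι (· ≤ ·)) (_ : Nonempty ι)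
    (_ : DecidableEq ι)
    (G : ι → Type v) (_ : ∀ i, AddCommGroup (G i)) (_ : ∀ i, Module R (G i))
    (f : ∀ i j : ι, i ≤ j → G i →ₗ[R] G j)
    (_ : DirectedSystem G fun i j h => f i j h),
    (∀ i, ∃ n : ℕ, n ≤ r ∧ Nonempty (G i ≃ₗ[R] (Fin n → R))) ∧
    Nonempty (Module.DirectLimit G f ≃ₗ[R] P)

theorem hasRankLE_localization_away {R : Type u} [CommRing R] {A : Type u} [CommRing A]
    [Algebra R A] (m : ℕ) (b : Module.Basis (Fin m) R A) (t : A) :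
    HasRankLE R m (Localization.Away t) := by
  set S := Localization.Away t with hS
  let ι := ULift.{u} ℕ
  let G : ι → Type u := fun _ => A
  let μ : ∀ i j : ι, i ≤ j → G i →ₗ[R] G j := fun i j _ =>
    Algebra.lmul R A (t ^ (j.down - i.down))
  haveI ds : DirectedSystem G fun i j h => μ i j h := by
    constructor
    · intro i x
      show t ^ (i.down - i.down) * x = x
      rw [Nat.sub_self, pow_zero, one_mul]
    · intro k j i hij hjk x
      have h1 : i.down ≤ j.down := hij
      have h2 : j.down ≤ k.down := hjk
      show t ^ (k.down - j.down) * (t ^ (j.down - i.down) * x) = t ^ (k.down - i.down) * x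
      rw [← mul_assoc, ← pow_add]
      congr 2
      omega
  let v : S := IsLocalization.Away.invSelf (S := S) t
  have key : ∀ n : ℕ, (algebraMap A S t) ^ n * v ^ n = 1 := fun n => by
    rw [← mul_pow, IsLocalization.Away.mul_invSelf, one_pow]
  let ψ : ∀ i : ι, G i →ₗ[R] S := fun i =>
    (Algebra.lmul R S (v ^ i.down)).comp (IsScalarTower.toAlgHom R A S).toLinearMap
  have hψ : ∀ (i j : ι) (hij : i ≤ j) (x : G i), ψ j (μ i j hij x) = ψ i x := by
    intro i j hij x
    have h' : i.down ≤ j.down := hij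
    have hv : v ^ j.down = v ^ (j.down - i.down) * v ^ i.down := by
      rw [← pow_add, Nat.sub_add_cancel h']
    show v ^ j.down * algebraMap A S (t ^ (j.down - i.down) * x)
        = v ^ i.down * algebraMap A S x
    rw [map_mul, map_pow, hv]
    calc v ^ (j.down - i.down) * v ^ i.down * ((algebraMap A S t) ^ (j.down - i.down)
            * algebraMap A S x)
        = ((algebraMap A S t) ^ (j.down - i.down) * v ^ (j.down - i.down)) *
            (v ^ i.down * algebraMap A S x) := by ring
      _ = v ^ i.down * algebraMap A S x := by rw [key, one_mul]
  let L : Module.DirectLimit G μ →ₗ[R] S := Module.DirectLimit.lift R ι G μ ψ hψ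
  have hLof : ∀ (i : ι) (x : G i),
      L (Module.DirectLimit.of R ι G μ i x) = v ^ i.down * algebraMap A S x := fun i x =>
    Module.DirectLimit.lift_of (f := μ) (g := ψ) (Hg := hψ) x
  have hsurj : Function.Surjective L := by
    intro x
    obtain ⟨a, s, rfl⟩ := IsLocalization.exists_mk'_eq (Submonoid.powers t) x
    obtain ⟨n, hn⟩ := s.2
    refine ⟨Module.DirectLimit.of R ι G μ ⟨n⟩ a, ?_⟩
    rw [hLof]
    rw [IsLocalization.eq_mk'_iff_mul_eq]
    show v ^ n * algebraMap A S a * algebraMap A S (s : A) = algebraMap A S a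
    rw [← hn, map_pow]
    calc v ^ n * algebraMap A S a * (algebraMap A S t) ^ n
        = ((algebraMap A S t) ^ n * v ^ n) * algebraMap A S a := by ring
      _ = algebraMap A S a := by rw [key, one_mul]
  have hinj : Function.Injective L := by
    rw [injective_iff_map_eq_zero]
    intro z hz
    obtain ⟨i, x, rfl⟩ := Module.DirectLimit.exists_of z
    rw [hLof] at hz
    have hx0 : algebraMap A S x = 0 := by
      calc algebraMap A S x
          = ((algebraMap A S t) ^ i.down * v ^ i.down) * algebraMap A S x := by
            rw [key, one_mul]
        _ = (algebraMap A S t) ^ i.down * (v ^ i.down * algebraMap A S x) := by ring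
        _ = 0 := by rw [hz, mul_zero]
    obtain ⟨s, hs⟩ := (IsLocalization.map_eq_zero_iff (Submonoid.powers t) S x).mp hx0
    obtain ⟨n, hn⟩ := s.2
    rw [← hn] at hs
    have hle : i ≤ (⟨i.down + n⟩ : ι) := Nat.le_add_right _ _
    rw [← Module.DirectLimit.of_f (f := μ) (hij := hle) (x := x)]
    have hμ : μ i ⟨i.down + n⟩ hle x = 0 := by
      show t ^ (i.down + n - i.down) * x = 0
      rw [Nat.add_sub_cancel_left]
      exact hs
    rw [hμ, map_zero]
  refine ⟨ι, inferInstance, inferInstance, ⟨⟨0⟩⟩, inferInstance, G,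
    fun _ => inferInstance, fun _ => inferInstance, μ, ds,
    fun i => ⟨m, le_rfl, ⟨b.equivFun⟩⟩, ⟨LinearEquiv.ofBijective L ⟨hinj, hsurj⟩⟩⟩

/-- Example 3.3 (standard étale type algebras): for a monic `g` of degree `m` and any `f`,
the localization of `R[X]/(g)` at the powers of the image of `f` has rank at most `m`
as an `R`-module. -/
theorem standardEtale_hasRankLE (R : Type u) [CommRing R] (m : ℕ) (g f : Polynomial R)
    (hg : g.Monic) (hdeg : g.natDegree = m) :
    letI A := Polynomial R ⧸ Ideal.span {g}
    letI S := Localization.Away (Ideal.Quotient.mk (Ideal.span {g}) f)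
    letI : Algebra R S := ((algebraMap A S).comp (algebraMap R A)).toAlgebra
    HasRankLE R m S := by
  subst hdeg
  exact hasRankLE_localization_away _ ((AdjoinRoot.powerBasis' hg).basis)
    (Ideal.Quotient.mk (Ideal.span {g}) f)
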